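/- Let ρ₁₁, ρ₁₂, ρ₂₂ ≥ 0 be real numbers, H₁₁ an N₁×M₁ complex matrix, H₁₂ and H₂₂ respectively N₂×M₁ and N₂×M₂ complex matrices, and Q an M₁×M₂ complex matrix with Q Q† ⪯ I_{M₁}. Then det(I_{N₂} + ρ₂₂ H₂₂ H₂₂† + ρ₁₂ H₁₂ H₁₂† + √(ρ₂₂ρ₁₂) H₂₂ Q† H₁₂† + √(ρ₂₂ρ₁₂) H₁₂ Q H₂₂†) · det(I_{N₁} + ρ₁₁ H₁₁ H₁₁† − [√(ρ₁₁ρ₁₂) H₁₁ H₁₂†, √ρ₁₁ H₁₁ Q] · [[I_{N₂} + ρ₁₂ H₁₂ H₁₂†, √ρ₁₂ H₁₂ Q], [√ρ₁₂ Q† H₁₂†, I_{M₂}]]^{-1} · [√(ρ₁₁ρ₁₂) H₁₂ H₁₁†; √ρ₁₁ Q† H₁₁†]) ≤ 2^{N₂} · det(I_{N₂} + ρ₂₂ H₂₂ H₂₂† + ρ₁₂ H₁₂ H₁₂†) · det(I_{N₁} + ρ₁₁ H₁₁ H₁₁† − ρ₁₁ ρ₁₂ H₁₁ H₁₂† (I_{N₂}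 + ρ₁₂ H₁₂ H₁₂†)^{-1} H₁₂ H₁₁†), where all matrices whose determinants appear are Hermitian positive semidefinite so their determinants are nonnegative reals; the inner 2×2 block matrix and I_{N₂} + ρ₁₂ H₁₂ H₁₂† are positive definite, hence invertible. -/

import Mathlib

open scoped ComplexOrder Matrix

open Matrix

section Helpers

variable {n : Type*} [Fintype n] [DecidableEq n]

open scoped MatrixOrder

private lemma psd_det_eq {A : Matrix n n ℂ} (hA : A.PosSemidef) :
    ∃ a : ℝ, 0 ≤ a ∧ A.det = (a : ℂ) := by
  refine ⟨∏ i, hA.1.eigenvalues i, Finset.prod_nonneg fun i _ => hA.eigenvalues_nonneg i, ?_⟩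
  rw [hA.1.det_eq_prod_eigenvalues]; push_cast; rfl

private lemma posDef_of_psd_det_ne_zero {A : Matrix n n ℂ} (hA : A.PosSemidef)
    (h : A.det ≠ 0) : A.PosDef := by
  exact hA.posDef_iff_det_ne_zero.mpr h

private lemma eig_le_one {C : Matrix n n ℂ} (hC : C.PosSemidef)
    (h1 : ((1 : Matrix n n ℂ) - C).PosSemidef) (i : n) : hC.1.eigenvalues i ≤ 1 := by
  have h := h1.re_dotProduct_nonneg (hC.1.eigenvectorBasis i)
  rw [sub_mulVec, one_mulVec, dotProduct_sub, map_sub] at h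
  simp only [RCLike.re_to_complex] at h
  have h2 : hC.1.eigenvalues i =
      Complex.re (dotProduct (star ⇑(hC.1.eigenvectorBasis i))
        (C *ᵥ ⇑(hC.1.eigenvectorBasis i))) := hC.1.eigenvalues_eq i
  have h3 : Complex.re (dotProduct (star ⇑(hC.1.eigenvectorBasis i))
      ⇑(hC.1.eigenvectorBasis i)) = 1 := by
    have hn : ‖hC.1.eigenvectorBasis i‖ = 1 := hC.1.eigenvectorBasis.orthonormal.1 i
    have h4 : (inner ℂ (hC.1.eigenvectorBasis i) (hC.1.eigenvectorBasis i) : ℂ) =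
        dotProduct (star ⇑(hC.1.eigenvectorBasis i)) ⇑(hC.1.eigenvectorBasis i) :=
      (EuclideanSpace.inner_eq_star_dotProduct _ _).trans (dotProduct_comm _ _)
    rw [inner_self_eq_norm_sq_to_K, hn] at h4
    have := congrArg Complex.re h4.symm
    simpa using this
  rw [h2, ← h3]
  exact sub_nonneg.mp h

private lemma det_le_one' {C : Matrix n n ℂ} (hC : C.PosSemidef)
    (h1 : ((1 : Matrix n n ℂ) - C).PosSemidef) :
    ∃ c : ℝ, 0 ≤ c ∧ c ≤ 1 ∧ C.det = (c : ℂ) := by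
  refine ⟨∏ i, hC.1.eigenvalues i, Finset.prod_nonneg fun i _ => hC.eigenvalues_nonneg i,
    Finset.prod_le_one (fun i _ => hC.eigenvalues_nonneg i)
      (fun i _ => eig_le_one hC h1 i), ?_⟩
  rw [hC.1.det_eq_prod_eigenvalues]; push_cast; rfl

private lemma det_le_det' {A B : Matrix n n ℂ} (hA : A.PosSemidef) (hB : B.PosDef)
    (hBA : (B - A).PosSemidef) {a b : ℝ} (ha : A.det = (a : ℝ)) (hb : B.det = (b : ℝ)) :
    a ≤ b := by
  set S := CFC.sqrt B with hSdef
  have hS : S.PosSemidef := (CFC.sqrt_nonneg B).posSemidef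
  have hSS : S * S = B := CFC.sqrt_mul_sqrt_self B hB.posSemidef.nonneg
  have hdetSS : S.det * S.det = B.det := by rw [← det_mul, hSS]
  have hdetB : B.det ≠ 0 := hB.det_pos.ne'
  have hdetS : S.det ≠ 0 := fun h => hdetB (by rw [← hdetSS, h, zero_mul])
  have hSiS : S⁻¹ * S = 1 := nonsing_inv_mul S (isUnit_iff_ne_zero.mpr hdetS)
  have hSSi : S * S⁻¹ = 1 := mul_nonsing_inv S (isUnit_iff_ne_zero.mpr hdetS)
  have hSinvH : (S⁻¹)ᴴ = S⁻¹ := by rw [conjTranspose_nonsing_inv, hS.1.eq]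
  set C := S⁻¹ * A * S⁻¹ with hCdef
  have hC : C.PosSemidef := by
    have := hA.mul_mul_conjTranspose_same S⁻¹
    rwa [hSinvH] at this
  have h1C : ((1 : Matrix n n ℂ) - C).PosSemidef := by
    have := hBA.mul_mul_conjTranspose_same S⁻¹
    rw [hSinvH] at this
    have heq : S⁻¹ * (B - A) * S⁻¹ = 1 - C := by
      rw [Matrix.mul_sub, Matrix.sub_mul, hCdef, ← hSS]
      congr 1
      rw [← Matrix.mul_assoc, Matrix.mul_assoc (S⁻¹ * S), hSiS, Matrix.one_mul, hSSi]
    rwa [heq] at this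
  obtain ⟨c, hc0, hc1, hcdet⟩ := det_le_one' hC h1C
  have hACS : A = S * C * S := by
    rw [hCdef, ← Matrix.mul_assoc, ← Matrix.mul_assoc, hSSi, Matrix.one_mul, Matrix.mul_assoc,
      hSiS, Matrix.mul_one]
  have hdetA : A.det = B.det * C.det := by
    rw [hACS, det_mul, det_mul, ← hdetSS]; ring
  rw [ha, hb, hcdet] at hdetA
  have hab : a = b * c := by exact_mod_cast hdetA
  have hbpos : 0 < b := by
    have := hB.det_pos
    rw [hb] at this
    exact_mod_cast this
  rw [hab]
  exact mul_le_of_le_one_right hbpos.le hc1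

end Helpers

/-- `I_{N₂} + ρ₂₂H₂₂H₂₂ᴴ + ρ₁₂H₁₂H₁₂ᴴ + √(ρ₂₂ρ₁₂)H₂₂QᴴH₁₂ᴴ + √(ρ₂₂ρ₁₂)H₁₂QH₂₂ᴴ`. -/
noncomputable def corrSum {N₂ M₁ M₂ : ℕ} (ρ₂₂ ρ₁₂ : ℝ)
    (H22 : Matrix (Fin N₂) (Fin M₂) ℂ) (H12 : Matrix (Fin N₂) (Fin M₁) ℂ)
    (Q : Matrix (Fin M₁) (Fin M₂) ℂ) : Matrix (Fin N₂) (Fin N₂) ℂ :=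
  (1 : Matrix (Fin N₂) (Fin N₂) ℂ) + (ρ₂₂ : ℂ) • (H22 * H22ᴴ) + (ρ₁₂ : ℂ) • (H12 * H12ᴴ) +
    (Real.sqrt (ρ₂₂ * ρ₁₂) : ℂ) • (H22 * Qᴴ * H12ᴴ) +
    (Real.sqrt (ρ₂₂ * ρ₁₂) : ℂ) • (H12 * Q * H22ᴴ)

/-- The inner 2×2 block matrix `[[I + ρ₁₂H₁₂H₁₂ᴴ, √ρ₁₂H₁₂Q], [√ρ₁₂QᴴH₁₂ᴴ, I]]`. -/
noncomputable def innerBlock {N₂ M₁ M₂ : ℕ} (ρ₁₂ : ℝ) (H12 : Matrix (Fin N₂) (Fin M₁) ℂ)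
    (Q : Matrix (Fin M₁) (Fin M₂) ℂ) :
    Matrix (Fin N₂ ⊕ Fin M₂) (Fin N₂ ⊕ Fin M₂) ℂ :=
  Matrix.fromBlocks ((1 : Matrix (Fin N₂) (Fin N₂) ℂ) + (ρ₁₂ : ℂ) • (H12 * H12ᴴ))
    ((Real.sqrt ρ₁₂ : ℂ) • (H12 * Q)) ((Real.sqrt ρ₁₂ : ℂ) • (Qᴴ * H12ᴴ))
    (1 : Matrix (Fin M₂) (Fin M₂) ℂ)

/-- `I_{N₁} + ρ₁₁H₁₁H₁₁ᴴ` minus the Schur-complement correction with correlation `Q`. -/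
noncomputable def corrSchur {N₁ N₂ M₁ M₂ : ℕ} (ρ₁₁ ρ₁₂ : ℝ)
    (H11 : Matrix (Fin N₁) (Fin M₁) ℂ) (H12 : Matrix (Fin N₂) (Fin M₁) ℂ)
    (Q : Matrix (Fin M₁) (Fin M₂) ℂ) : Matrix (Fin N₁) (Fin N₁) ℂ :=
  (1 : Matrix (Fin N₁) (Fin N₁) ℂ) + (ρ₁₁ : ℂ) • (H11 * H11ᴴ) -
    Matrix.fromCols ((Real.sqrt (ρ₁₁ * ρ₁₂) : ℂ) • (H11 * H12ᴴ))
        ((Real.sqrt ρ₁₁ : ℂ) • (H11 * Q)) *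
      (innerBlock ρ₁₂ H12 Q)⁻¹ *
      Matrix.fromRows ((Real.sqrt (ρ₁₁ * ρ₁₂) : ℂ) • (H12 * H11ᴴ))
        ((Real.sqrt ρ₁₁ : ℂ) • (Qᴴ * H11ᴴ))

/-- `I_{N₂} + ρ₂₂H₂₂H₂₂ᴴ + ρ₁₂H₁₂H₁₂ᴴ`. -/
noncomputable def uncorrSum {N₂ M₁ M₂ : ℕ} (ρ₂₂ ρ₁₂ : ℝ)
    (H22 : Matrix (Fin N₂) (Fin M₂) ℂ) (H12 : Matrix (Fin N₂) (Fin M₁) ℂ) :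
    Matrix (Fin N₂) (Fin N₂) ℂ :=
  (1 : Matrix (Fin N₂) (Fin N₂) ℂ) + (ρ₂₂ : ℂ) • (H22 * H22ᴴ) + (ρ₁₂ : ℂ) • (H12 * H12ᴴ)

/-- `I_{N₁} + ρ₁₁H₁₁H₁₁ᴴ − ρ₁₁ρ₁₂ H₁₁H₁₂ᴴ (I + ρ₁₂H₁₂H₁₂ᴴ)⁻¹ H₁₂H₁₁ᴴ`. -/
noncomputable def uncorrSchur {N₁ N₂ M₁ : ℕ} (ρ₁₁ ρ₁₂ : ℝ)
    (H11 : Matrix (Fin N₁) (Fin M₁) ℂ) (H12 : Matrix (Fin N₂) (Fin M₁) ℂ) :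
    Matrix (Fin N₁) (Fin N₁) ℂ :=
  (1 : Matrix (Fin N₁) (Fin N₁) ℂ) + (ρ₁₁ : ℂ) • (H11 * H11ᴴ) -
    ((ρ₁₁ * ρ₁₂ : ℝ) : ℂ) •
      (H11 * H12ᴴ * ((1 : Matrix (Fin N₂) (Fin N₂) ℂ) + (ρ₁₂ : ℂ) • (H12 * H12ᴴ))⁻¹ *
        (H12 * H11ᴴ))

/-- Fifth-bound estimate: the product of the two correlated determinants is at most
`2^{N₂}` times the product of the two uncorrelated ones; all matrices whose determinants
appear are Hermitian PSD (so the determinants are nonnegative reals), and the inner block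
matrix and `I + ρ₁₂H₁₂H₁₂ᴴ` are positive definite. -/
theorem det_product_correlated_le_pow {N₁ N₂ M₁ M₂ : ℕ} (ρ₁₁ ρ₁₂ ρ₂₂ : ℝ)
    (hρ₁₁ : 0 ≤ ρ₁₁) (hρ₁₂ : 0 ≤ ρ₁₂) (hρ₂₂ : 0 ≤ ρ₂₂)
    (H11 : Matrix (Fin N₁) (Fin M₁) ℂ) (H12 : Matrix (Fin N₂) (Fin M₁) ℂ)
    (H22 : Matrix (Fin N₂) (Fin M₂) ℂ)
    (Q : Matrix (Fin M₁) (Fin M₂) ℂ)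
    (hQ : ((1 : Matrix (Fin M₁) (Fin M₁) ℂ) - Q * Qᴴ).PosSemidef) :
    (corrSum ρ₂₂ ρ₁₂ H22 H12 Q).PosSemidef ∧ (corrSchur ρ₁₁ ρ₁₂ H11 H12 Q).PosSemidef ∧
    (uncorrSum (M₁ := M₁) ρ₂₂ ρ₁₂ H22 H12).PosSemidef ∧
    (uncorrSchur ρ₁₁ ρ₁₂ H11 H12).PosSemidef ∧
    (innerBlock ρ₁₂ H12 Q).PosDef ∧
    ((1 : Matrix (Fin N₂) (Fin N₂) ℂ) + (ρ₁₂ : ℂ) • (H12 * H12ᴴ)).PosDef ∧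
    ∃ a₁ a₂ b₁ b₂ : ℝ, 0 ≤ a₁ ∧ 0 ≤ a₂ ∧ 0 ≤ b₁ ∧ 0 ≤ b₂ ∧
      (corrSum ρ₂₂ ρ₁₂ H22 H12 Q).det = (a₁ : ℂ) ∧
      (corrSchur ρ₁₁ ρ₁₂ H11 H12 Q).det = (a₂ : ℂ) ∧
      (uncorrSum (M₁ := M₁) ρ₂₂ ρ₁₂ H22 H12).det = (b₁ : ℂ) ∧
      (uncorrSchur ρ₁₁ ρ₁₂ H11 H12).det = (b₂ : ℂ) ∧
      a₁ * a₂ ≤ 2 ^ N₂ * (b₁ * b₂) := by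
  classical
  -- abbreviations
  set s1 : ℂ := (Real.sqrt ρ₁₁ : ℂ) with hs1def
  set s2 : ℂ := (Real.sqrt ρ₁₂ : ℂ) with hs2def
  set s3 : ℂ := (Real.sqrt ρ₂₂ : ℂ) with hs3def
  have hs1 : s1 * s1 = (ρ₁₁ : ℂ) := by
    rw [hs1def, ← Complex.ofReal_mul, Real.mul_self_sqrt hρ₁₁]
  have hs2 : s2 * s2 = (ρ₁₂ : ℂ) := by
    rw [hs2def, ← Complex.ofReal_mul, Real.mul_self_sqrt hρ₁₂]
  have hs3 : s3 * s3 = (ρ₂₂ : ℂ) := by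
    rw [hs3def, ← Complex.ofReal_mul, Real.mul_self_sqrt hρ₂₂]
  have hs12 : (Real.sqrt (ρ₁₁ * ρ₁₂) : ℂ) = s1 * s2 := by
    rw [Real.sqrt_mul hρ₁₁]; push_cast; rfl
  have hs32 : (Real.sqrt (ρ₂₂ * ρ₁₂) : ℂ) = s3 * s2 := by
    rw [Real.sqrt_mul hρ₂₂]; push_cast; rfl
  have hstar1 : star s1 = s1 := by rw [hs1def]; exact Complex.conj_ofReal _
  have hstar2 : star s2 = s2 := by rw [hs2def]; exact Complex.conj_ofReal _
  have hstar3 : star s3 = s3 := by rw [hs3def]; exact Complex.conj_ofReal _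
  set u : Matrix (Fin N₁) (Fin M₁) ℂ := s1 • H11 with hudef
  set v : Matrix (Fin N₂) (Fin M₁) ℂ := s2 • H12 with hvdef
  set w : Matrix (Fin N₂) (Fin M₂) ℂ := s3 • H22 with hwdef
  set R : Matrix (Fin M₁) (Fin M₁) ℂ := 1 - Q * Qᴴ with hRdef
  have huH : uᴴ = s1 • H11ᴴ := by rw [hudef, conjTranspose_smul, hstar1]
  have hvH : vᴴ = s2 • H12ᴴ := by rw [hvdef, conjTranspose_smul, hstar2]
  have hwH : wᴴ = s3 • H22ᴴ := by rw [hwdef, conjTranspose_smul, hstar3]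
  have huu : u * uᴴ = (ρ₁₁ : ℂ) • (H11 * H11ᴴ) := by
    rw [hudef, huH, Matrix.smul_mul, Matrix.mul_smul, smul_smul, hs1]
  have hvv : v * vᴴ = (ρ₁₂ : ℂ) • (H12 * H12ᴴ) := by
    rw [hvdef, hvH, Matrix.smul_mul, Matrix.mul_smul, smul_smul, hs2]
  have hww : w * wᴴ = (ρ₂₂ : ℂ) • (H22 * H22ᴴ) := by
    rw [hwdef, hwH, Matrix.smul_mul, Matrix.mul_smul, smul_smul, hs3]
  have hwQv : w * Qᴴ * vᴴ = (Real.sqrt (ρ₂₂ * ρ₁₂) : ℂ) • (H22 * Qᴴ * H12ᴴ) := by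
    rw [hs32, hwdef, hvH, Matrix.smul_mul, Matrix.smul_mul, Matrix.mul_smul, smul_smul]
  have hvQw : v * Q * wᴴ = (Real.sqrt (ρ₂₂ * ρ₁₂) : ℂ) • (H12 * Q * H22ᴴ) := by
    rw [hs32, hvdef, hwH, Matrix.smul_mul, Matrix.smul_mul, Matrix.mul_smul, smul_smul,
      mul_comm s2 s3]
  -- the uncorrelated sum
  have huncorrSum_eq : uncorrSum (M₁ := M₁) ρ₂₂ ρ₁₂ H22 H12 = 1 + w * wᴴ + v * vᴴ := by
    rw [uncorrSum, hvv, hww]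
  have hUSum_pd : (uncorrSum (M₁ := M₁) ρ₂₂ ρ₁₂ H22 H12).PosDef := by
    rw [huncorrSum_eq, add_assoc]
    exact Matrix.PosDef.one.add_posSemidef
      ((posSemidef_self_mul_conjTranspose w).add (posSemidef_self_mul_conjTranspose v))
  -- the correlated sum
  have hcorrSum_eq : corrSum ρ₂₂ ρ₁₂ H22 H12 Q
      = 1 + w * wᴴ + v * vᴴ + w * Qᴴ * vᴴ + v * Q * wᴴ := by
    rw [corrSum, hvv, hww, hwQv, hvQw]
  have hcorrSum_eq2 : corrSum ρ₂₂ ρ₁₂ H22 H12 Q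
      = 1 + (w + v * Q) * (w + v * Q)ᴴ + v * R * vᴴ := by
    rw [hcorrSum_eq, hRdef]
    simp only [conjTranspose_add, conjTranspose_mul, Matrix.mul_add, Matrix.add_mul,
      Matrix.mul_sub, Matrix.sub_mul, Matrix.mul_one, Matrix.one_mul, Matrix.mul_assoc]
    abel
  have hcorrSum_psd : (corrSum ρ₂₂ ρ₁₂ H22 H12 Q).PosSemidef := by
    rw [hcorrSum_eq2]
    exact (Matrix.PosSemidef.one.add (posSemidef_self_mul_conjTranspose _)).add
      (hQ.mul_mul_conjTranspose_same v)
  have hdiff1 : (uncorrSum (M₁ := M₁) ρ₂₂ ρ₁₂ H22 H12 + uncorrSum (M₁ := M₁) ρ₂₂ ρ₁₂ H22 H12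
      - corrSum ρ₂₂ ρ₁₂ H22 H12 Q)
      = 1 + (w - v * Q) * (w - v * Q)ᴴ + v * R * vᴴ := by
    rw [hcorrSum_eq, huncorrSum_eq, hRdef]
    simp only [conjTranspose_sub, conjTranspose_mul, Matrix.mul_add, Matrix.add_mul,
      Matrix.mul_sub, Matrix.sub_mul, Matrix.mul_one, Matrix.one_mul, Matrix.mul_assoc]
    abel
  -- Schur part setup
  set A₀ : Matrix (Fin N₂) (Fin N₂) ℂ := 1 + v * vᴴ with hA₀def
  set B₀ : Matrix (Fin N₂) (Fin M₂) ℂ := v * Q with hB₀def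
  set S₀ : Matrix (Fin N₁) (Fin N₁) ℂ := 1 + u * uᴴ with hS₀def
  set X₁ : Matrix (Fin N₁) (Fin N₂) ℂ := u * vᴴ with hX₁def
  set X₂ : Matrix (Fin N₁) (Fin M₂) ℂ := u * Q with hX₂def
  have hA₀eq : (1 : Matrix (Fin N₂) (Fin N₂) ℂ) + (ρ₁₂ : ℂ) • (H12 * H12ᴴ) = A₀ := by
    rw [hA₀def, hvv]
  have hA₀_pd : A₀.PosDef := by
    rw [hA₀def]
    exact Matrix.PosDef.one.add_posSemidef (posSemidef_self_mul_conjTranspose v)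
  have hB₀eq : B₀ = s2 • (H12 * Q) := by rw [hB₀def, hvdef, Matrix.smul_mul]
  have hB₀H : B₀ᴴ = s2 • (Qᴴ * H12ᴴ) := by
    rw [hB₀def, conjTranspose_mul, hvH, Matrix.mul_smul]
  have hIB_eq : innerBlock ρ₁₂ H12 Q = fromBlocks A₀ B₀ B₀ᴴ 1 := by
    rw [innerBlock, hA₀eq, ← hs2def, ← hB₀eq, ← hB₀H]
  have hSc_eq : A₀ - B₀ * B₀ᴴ = 1 + v * R * vᴴ := by
    rw [hA₀def, hB₀def, hRdef, conjTranspose_mul]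
    simp only [Matrix.mul_sub, Matrix.sub_mul, Matrix.mul_add, Matrix.add_mul, Matrix.mul_one,
      Matrix.one_mul, Matrix.mul_assoc]
    abel
  have hSc_pd : (A₀ - B₀ * B₀ᴴ).PosDef := by
    rw [hSc_eq]
    exact Matrix.PosDef.one.add_posSemidef (hQ.mul_mul_conjTranspose_same v)
  haveI : Invertible (1 : Matrix (Fin M₂) (Fin M₂) ℂ) := invertibleOne
  have hIB_psd : (innerBlock ρ₁₂ H12 Q).PosSemidef := by
    rw [hIB_eq]
    refine (PosDef.fromBlocks₂₂ A₀ B₀ Matrix.PosDef.one).mpr ?_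
    rw [inv_one, Matrix.mul_one]
    exact hSc_pd.posSemidef
  have hIB_det : (innerBlock ρ₁₂ H12 Q).det = (A₀ - B₀ * B₀ᴴ).det := by
    rw [hIB_eq, det_fromBlocks_one₂₂]
  have hIB_pd : (innerBlock ρ₁₂ H12 Q).PosDef :=
    posDef_of_psd_det_ne_zero hIB_psd (by rw [hIB_det]; exact hSc_pd.det_pos.ne')
  have hIBfb_pd : (fromBlocks A₀ B₀ B₀ᴴ (1 : Matrix (Fin M₂) (Fin M₂) ℂ)).PosDef :=
    hIB_eq ▸ hIB_pd
  haveI iA₀ : Invertible A₀ := hA₀_pd.isUnit.invertible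
  have hinvA₀ : ⅟A₀ = A₀⁻¹ := invOf_eq_nonsing_inv A₀
  set Sm : Matrix (Fin M₂) (Fin M₂) ℂ := 1 - B₀ᴴ * ⅟A₀ * B₀ with hSmdef
  have hSm_psd : Sm.PosSemidef := by
    have h := (PosDef.fromBlocks₁₁ B₀ (1 : Matrix (Fin M₂) (Fin M₂) ℂ) hA₀_pd).mp
      (hIB_eq ▸ hIB_psd)
    rw [hSmdef, hinvA₀]
    exact h
  have hdetIB₁ : (fromBlocks A₀ B₀ B₀ᴴ (1 : Matrix (Fin M₂) (Fin M₂) ℂ)).det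
      = A₀.det * Sm.det := by
    rw [det_fromBlocks₁₁, hSmdef]
  have hSm_det : Sm.det ≠ 0 := by
    intro h
    have h0 : (innerBlock ρ₁₂ H12 Q).det = 0 := by rw [hIB_eq, hdetIB₁, h, mul_zero]
    exact hIB_pd.det_pos.ne' h0
  have hSm_pd : Sm.PosDef := posDef_of_psd_det_ne_zero hSm_psd hSm_det
  haveI iSm : Invertible Sm := hSm_pd.isUnit.invertible
  haveI iSm' : Invertible ((1 : Matrix (Fin M₂) (Fin M₂) ℂ) - B₀ᴴ * ⅟A₀ * B₀) := iSm
  haveI iIB : Invertible (fromBlocks A₀ B₀ B₀ᴴ (1 : Matrix (Fin M₂) (Fin M₂) ℂ)) :=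
    fromBlocks₁₁Invertible A₀ B₀ B₀ᴴ 1
  have hA₀inv_H : (⅟A₀)ᴴ = ⅟A₀ := by
    rw [hinvA₀, conjTranspose_nonsing_inv, hA₀_pd.1.eq]
  have hSm_inv_H : (⅟Sm)ᴴ = ⅟Sm := by
    rw [invOf_eq_nonsing_inv, conjTranspose_nonsing_inv, hSm_pd.1.eq]
  have hIBinv : (fromBlocks A₀ B₀ B₀ᴴ (1 : Matrix (Fin M₂) (Fin M₂) ℂ))⁻¹
      = fromBlocks (⅟A₀ + ⅟A₀ * B₀ * ⅟Sm * B₀ᴴ * ⅟A₀) (-(⅟A₀ * B₀ * ⅟Sm))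
          (-(⅟Sm * B₀ᴴ * ⅟A₀)) (⅟Sm) := by
    rw [← invOf_eq_nonsing_inv]
    exact invOf_fromBlocks₁₁_eq A₀ B₀ B₀ᴴ 1
  set Wm : Matrix (Fin N₁) (Fin M₂) ℂ := X₁ * ⅟A₀ * B₀ - X₂ with hWmdef
  have hXMX : fromCols X₁ X₂ * (fromBlocks A₀ B₀ B₀ᴴ (1 : Matrix (Fin M₂) (Fin M₂) ℂ))⁻¹ *
        (fromCols X₁ X₂)ᴴ
      = X₁ * ⅟A₀ * X₁ᴴ + Wm * ⅟Sm * Wmᴴ := by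
    rw [hIBinv, conjTranspose_fromCols_eq_fromRows_conjTranspose, fromCols_mul_fromBlocks,
      fromCols_mul_fromRows, hWmdef]
    simp only [conjTranspose_sub, conjTranspose_mul, hA₀inv_H, hSm_inv_H]
    simp only [Matrix.mul_add, Matrix.add_mul, Matrix.mul_sub, Matrix.sub_mul, Matrix.neg_mul,
      Matrix.mul_neg, Matrix.mul_assoc]
    abel
  have hX₁eq : X₁ = (Real.sqrt (ρ₁₁ * ρ₁₂) : ℂ) • (H11 * H12ᴴ) := by
    rw [hX₁def, hudef, hvH, Matrix.smul_mul, Matrix.mul_smul, smul_smul, hs12]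
  have hX₂eq : X₂ = s1 • (H11 * Q) := by rw [hX₂def, hudef, Matrix.smul_mul]
  have hX₁H' : X₁ᴴ = v * uᴴ := by
    rw [hX₁def, conjTranspose_mul, conjTranspose_conjTranspose]
  have hX₁H : X₁ᴴ = (Real.sqrt (ρ₁₁ * ρ₁₂) : ℂ) • (H12 * H11ᴴ) := by
    rw [hX₁H', hvdef, huH, Matrix.smul_mul, Matrix.mul_smul, smul_smul, hs12, mul_comm s2 s1]
  have hX₂H : X₂ᴴ = s1 • (Qᴴ * H11ᴴ) := by
    rw [hX₂def, conjTranspose_mul, huH, Matrix.mul_smul]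
  have hcorrSchur_eq : corrSchur ρ₁₁ ρ₁₂ H11 H12 Q
      = S₀ - fromCols X₁ X₂ * (fromBlocks A₀ B₀ B₀ᴴ (1 : Matrix (Fin M₂) (Fin M₂) ℂ))⁻¹ *
          (fromCols X₁ X₂)ᴴ := by
    rw [corrSchur, hIB_eq, ← hs1def, ← hX₁eq, ← hX₂eq, ← hX₁H, ← hX₂H, ← huu, ← hS₀def,
      conjTranspose_fromCols_eq_fromRows_conjTranspose]
  have hX₁AX₁ : X₁ * A₀⁻¹ * X₁ᴴ
      = ((ρ₁₁ * ρ₁₂ : ℝ) : ℂ) • (H11 * H12ᴴ * A₀⁻¹ * (H12 * H11ᴴ)) := by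
    rw [hX₁H, hX₁eq, Matrix.smul_mul, Matrix.smul_mul, Matrix.mul_smul, smul_smul,
      ← Complex.ofReal_mul, Real.mul_self_sqrt (mul_nonneg hρ₁₁ hρ₁₂)]
  have huncorrSchur_eq : uncorrSchur ρ₁₁ ρ₁₂ H11 H12 = S₀ - X₁ * A₀⁻¹ * X₁ᴴ := by
    rw [uncorrSchur, hA₀eq, ← huu, ← hS₀def, ← hX₁AX₁]
  -- the big 3x3 matrix & its PSD-ness
  set Yb : Matrix (Fin N₁ ⊕ Fin N₂) (Fin M₂) ℂ := fromRows X₂ B₀ with hYbdef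
  set U₂ : Matrix (Fin N₁ ⊕ Fin N₂) (Fin N₁ ⊕ Fin N₂) ℂ := fromBlocks S₀ X₁ X₁ᴴ A₀ with hU₂def
  have hU₂eq : (1 : Matrix (Fin N₁ ⊕ Fin N₂) (Fin N₁ ⊕ Fin N₂) ℂ) +
      fromRows u v * (fromRows u v)ᴴ = U₂ := by
    rw [conjTranspose_fromRows_eq_fromCols_conjTranspose, fromRows_mul_fromCols,
      ← fromBlocks_one, fromBlocks_add, hU₂def, hS₀def, hA₀def, hX₁def, hX₁H',
      zero_add, zero_add]
  have hU₂_pd : U₂.PosDef := by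
    rw [← hU₂eq]
    exact Matrix.PosDef.one.add_posSemidef (posSemidef_self_mul_conjTranspose _)
  have hX₂H' : X₂ᴴ = Qᴴ * uᴴ := by rw [hX₂def, conjTranspose_mul]
  have hB₀H' : B₀ᴴ = Qᴴ * vᴴ := by rw [hB₀def, conjTranspose_mul]
  have h11 : S₀ - X₂ * X₂ᴴ = 1 + u * R * uᴴ := by
    rw [hS₀def, hX₂def, hX₂H', hRdef]
    simp only [Matrix.mul_sub, Matrix.sub_mul, Matrix.mul_one, Matrix.one_mul, Matrix.mul_assoc]
    abel
  have h12 : X₁ - X₂ * B₀ᴴ = u * R * vᴴ := by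
    rw [hX₁def, hX₂def, hB₀H', hRdef]
    simp only [Matrix.mul_sub, Matrix.sub_mul, Matrix.mul_one, Matrix.one_mul, Matrix.mul_assoc]
  have h21 : X₁ᴴ - B₀ * X₂ᴴ = v * R * uᴴ := by
    rw [hX₁H', hX₂H', hB₀def, hRdef]
    simp only [Matrix.mul_sub, Matrix.sub_mul, Matrix.mul_one, Matrix.one_mul, Matrix.mul_assoc]
  have hYY : U₂ - Yb * Ybᴴ
      = fromBlocks (1 + u * R * uᴴ) (u * R * vᴴ) (v * R * uᴴ) (1 + v * R * vᴴ) := by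
    rw [hYbdef, conjTranspose_fromRows_eq_fromCols_conjTranspose, fromRows_mul_fromCols,
      hU₂def, ← h11, ← h12, ← h21, ← hSc_eq]
    ext i j
    rcases i with i | i <;> rcases j with j | j <;> simp [Matrix.sub_apply]
  have hform : (1 : Matrix (Fin N₁ ⊕ Fin N₂) (Fin N₁ ⊕ Fin N₂) ℂ) +
        fromRows u v * R * (fromRows u v)ᴴ
      = fromBlocks (1 + u * R * uᴴ) (u * R * vᴴ) (v * R * uᴴ) (1 + v * R * vᴴ) := by
    rw [conjTranspose_fromRows_eq_fromCols_conjTranspose, Matrix.fromRows_mul,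
      fromRows_mul_fromCols, ← fromBlocks_one, fromBlocks_add, zero_add, zero_add]
  have hbig'_psd : (fromBlocks U₂ Yb Ybᴴ (1 : Matrix (Fin M₂) (Fin M₂) ℂ)).PosSemidef := by
    refine (PosDef.fromBlocks₂₂ U₂ Yb Matrix.PosDef.one).mpr ?_
    rw [inv_one, Matrix.mul_one, hYY, ← hform]
    exact (Matrix.PosDef.one.add_posSemidef (hQ.mul_mul_conjTranspose_same _)).posSemidef
  have hbig_eq : fromBlocks S₀ (fromCols X₁ X₂) (fromCols X₁ X₂)ᴴ
        (fromBlocks A₀ B₀ B₀ᴴ (1 : Matrix (Fin M₂) (Fin M₂) ℂ))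
      = (fromBlocks U₂ Yb Ybᴴ 1).submatrix (Equiv.sumAssoc (Fin N₁) (Fin N₂) (Fin M₂)).symm
          (Equiv.sumAssoc (Fin N₁) (Fin N₂) (Fin M₂)).symm := by
    rw [hU₂def, hYbdef, conjTranspose_fromCols_eq_fromRows_conjTranspose,
      conjTranspose_fromRows_eq_fromCols_conjTranspose]
    ext i j
    rcases i with i | i | i <;> rcases j with j | j | j <;> rfl
  have hbig_psd : (fromBlocks S₀ (fromCols X₁ X₂) (fromCols X₁ X₂)ᴴ
      (fromBlocks A₀ B₀ B₀ᴴ (1 : Matrix (Fin M₂) (Fin M₂) ℂ))).PosSemidef := by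
    rw [hbig_eq]
    exact (posSemidef_submatrix_equiv _).mpr hbig'_psd
  have hcorrSchur_psd : (corrSchur ρ₁₁ ρ₁₂ H11 H12 Q).PosSemidef := by
    rw [hcorrSchur_eq]
    exact (PosDef.fromBlocks₂₂ S₀ (fromCols X₁ X₂) hIBfb_pd).mp hbig_psd
  -- uncorrSchur PSD and PosDef
  have huncorr_psd' : (S₀ - X₁ * A₀⁻¹ * X₁ᴴ).PosSemidef :=
    (PosDef.fromBlocks₂₂ S₀ X₁ hA₀_pd).mp (hU₂def ▸ hU₂_pd.posSemidef)
  have huncorrSchur_psd : (uncorrSchur ρ₁₁ ρ₁₂ H11 H12).PosSemidef := by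
    rw [huncorrSchur_eq]; exact huncorr_psd'
  have hdetU₂ : U₂.det = A₀.det * (S₀ - X₁ * A₀⁻¹ * X₁ᴴ).det := by
    rw [hU₂def, det_fromBlocks₂₂, hinvA₀]
  have huncorrSchur_pd : (uncorrSchur ρ₁₁ ρ₁₂ H11 H12).PosDef := by
    refine posDef_of_psd_det_ne_zero huncorrSchur_psd ?_
    rw [huncorrSchur_eq]
    intro h
    have h0 : U₂.det = 0 := by rw [hdetU₂, h, mul_zero]
    exact hU₂_pd.det_pos.ne' h0
  have hdiff2 : uncorrSchur ρ₁₁ ρ₁₂ H11 H12 - corrSchur ρ₁₁ ρ₁₂ H11 H12 Q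
      = Wm * ⅟Sm * Wmᴴ := by
    rw [huncorrSchur_eq, hcorrSchur_eq, hXMX, hinvA₀]
    abel
  have hdiff2_psd : (uncorrSchur ρ₁₁ ρ₁₂ H11 H12 - corrSchur ρ₁₁ ρ₁₂ H11 H12 Q).PosSemidef := by
    rw [hdiff2, invOf_eq_nonsing_inv]
    exact (hSm_pd.inv).posSemidef.mul_mul_conjTranspose_same Wm
  -- final assembly
  obtain ⟨a₁, ha₁0, ha₁⟩ := psd_det_eq hcorrSum_psd
  obtain ⟨a₂, ha₂0, ha₂⟩ := psd_det_eq hcorrSchur_psd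
  obtain ⟨b₁, hb₁0, hb₁⟩ := psd_det_eq hUSum_pd.posSemidef
  obtain ⟨b₂, hb₂0, hb₂⟩ := psd_det_eq huncorrSchur_pd.posSemidef
  refine ⟨hcorrSum_psd, hcorrSchur_psd, hUSum_pd.posSemidef, huncorrSchur_psd, hIB_pd,
    (by rw [hA₀eq]; exact hA₀_pd), a₁, a₂, b₁, b₂, ha₁0, ha₂0, hb₁0, hb₂0, ha₁, ha₂, hb₁, hb₂, ?_⟩
  have hdet2 : (uncorrSum (M₁ := M₁) ρ₂₂ ρ₁₂ H22 H12
      + uncorrSum (M₁ := M₁) ρ₂₂ ρ₁₂ H22 H12).det = ((2 ^ N₂ * b₁ : ℝ) : ℂ) := by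
    rw [← two_smul ℂ, det_smul, hb₁, Fintype.card_fin]
    push_cast
    ring
  have h1 : a₁ ≤ 2 ^ N₂ * b₁ := by
    refine det_le_det' hcorrSum_psd (hUSum_pd.add hUSum_pd) ?_ ha₁ hdet2
    rw [hdiff1]
    exact (Matrix.PosSemidef.one.add (posSemidef_self_mul_conjTranspose _)).add
      (hQ.mul_mul_conjTranspose_same v)
  have h2 : a₂ ≤ b₂ := det_le_det' hcorrSchur_psd huncorrSchur_pd hdiff2_psd ha₂ hb₂
  calc a₁ * a₂ ≤ (2 ^ N₂ * b₁) * b₂ :=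
        mul_le_mul h1 h2 ha₂0 (by positivity)
    _ = 2 ^ N₂ * (b₁ * b₂) := by ring
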